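/- Let M ∈ ℝ^{d×d} be a monotone matrix, q, μ ∈ ℝ^d, η ∈ ℝ, and suppose p, r ∈ ℝ^d satisfy (I + M)p = μ and (I + M)r = q. Define a = 1 + rᵀr, b = rᵀμ − 2rᵀp − η, and c = pᵀ(p − μ). Then a > 0, c ≤ 0, and the discriminant satisfies b² − 4ac ≥ 0; consequently the quadratic equation aτ² + bτ + c = 0 has a real nonnegative root τ = (−b + √(b² − 4ac))/(2a) ≥ 0. -/

import Mathlib

open Matrix

/-- The quadratic equation arising in the evaluation of the resolvent of the
homogeneous embedding operator always has a real nonnegative root: with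
`(I + M)p = μ`, `(I + M)r = q`, `a = 1 + rᵀr`, `b = rᵀμ - 2rᵀp - η`,
`c = pᵀ(p - μ)`, we have `a > 0`, `c ≤ 0`, `b² - 4ac ≥ 0`, and
`τ = (-b + √(b² - 4ac)) / (2a)` satisfies `aτ² + bτ + c = 0` and `τ ≥ 0`. -/
theorem resolvent_quadratic_has_nonneg_root
    {d : ℕ} (M : Matrix (Fin d) (Fin d) ℝ)
    (hM : (M + Mᵀ).PosSemidef)
    (q μ : Fin d → ℝ) (η : ℝ)
    (p r : Fin d → ℝ)
    (hp : (1 + M) *ᵥ p = μ) (hr : (1 + M) *ᵥ r = q)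
    (a b c : ℝ)
    (ha : a = 1 + r ⬝ᵥ r)
    (hb : b = r ⬝ᵥ μ - 2 * (r ⬝ᵥ p) - η)
    (hc : c = p ⬝ᵥ (p - μ))
    (τ : ℝ) (hτ : τ = (-b + Real.sqrt (b ^ 2 - 4 * a * c)) / (2 * a)) :
    0 < a ∧ c ≤ 0 ∧ b ^ 2 - 4 * a * c ≥ 0 ∧
      a * τ ^ 2 + b * τ + c = 0 ∧ 0 ≤ τ := by
  have hrr : (0:ℝ) ≤ r ⬝ᵥ r := by
    simp only [dotProduct]
    exact Finset.sum_nonneg fun i _ => mul_self_nonneg _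
  have hA : 0 < a := by rw [ha]; linarith
  have hmono : (0:ℝ) ≤ p ⬝ᵥ (M *ᵥ p) := by
    have h := hM.dotProduct_mulVec_nonneg p
    simp only [star_trivial] at h
    have e : p ⬝ᵥ ((M + Mᵀ) *ᵥ p) = 2 * (p ⬝ᵥ (M *ᵥ p)) := by
      rw [Matrix.add_mulVec, dotProduct_add, Matrix.dotProduct_mulVec,
        Matrix.mulVec_transpose, dotProduct_comm p (p ᵥ* M)]
      ring
    rw [e] at h
    linarith
  have hC : c ≤ 0 := by
    rw [hc, ← hp, Matrix.add_mulVec, Matrix.one_mulVec]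
    have : p - (p + M *ᵥ p) = -(M *ᵥ p) := by abel
    rw [this, dotProduct_neg]
    linarith
  have hdisc : b ^ 2 - 4 * a * c ≥ 0 := by nlinarith [sq_nonneg b]
  have hs : Real.sqrt (b ^ 2 - 4 * a * c) ^ 2 = b ^ 2 - 4 * a * c :=
    Real.sq_sqrt hdisc
  have hsnn : 0 ≤ Real.sqrt (b ^ 2 - 4 * a * c) := Real.sqrt_nonneg _
  refine ⟨hA, hC, hdisc, ?_, ?_⟩
  · rw [hτ]
    field_simp
    rw [show a * 4 * c = 4 * a * c by ring]
    nlinarith [hs]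
  · rw [hτ]
    apply div_nonneg _ (by linarith)
    have : |b| ≤ Real.sqrt (b ^ 2 - 4 * a * c) := by
      rw [← Real.sqrt_sq_eq_abs]
      exact Real.sqrt_le_sqrt (by nlinarith)
    have := abs_le.mp this
    linarith [this.1]
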